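/- Let W be a complete discrete valuation ring of characteristic p with uniformizer μ, algebraically closed residue field and normalized valuation ν. Let q = p^e, r ≥ 2, t ∈ W, and g_1, …, g_{r−1}, g'_1, …, g'_{r−1} ∈ W. Set φ = tX + Σ_{i=1}^{r−1} g_i X^{q^i} + X^{q^r} and φ' = tX + Σ_{i=1}^{r−1} g'_i X^{q^i} + X^{q^r} in W[X]. For n ≥ 1 let Iso_n be the set of q-polynomials u over W/(μ^n) that are compositional units and satisfy u∘φ̄ = φ̄'∘u (bars denoting reduction of coefficients modulo μ^n). Then for all nonnegative integers δ_1, …, δ_{r−1} and every positive integer δ_r with Σ_{i=1}^{r−1} δ_i(q^i−1) = δ_r(q^r−1), one has in ℕ∪{∞}: (q^r−1)·ν(g_1^{δ_1}⋯g_{r−1}^{δ_{r−1}} − (g'_1)^{δ_1}⋯(g'_{r−1})^{δ_{r−1}}) ≥ Σ_{n≥1} #Iso_n. -/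

import Mathlib

/-- A `q`-polynomial: all nonzero coefficients sit in degrees that are powers of `q`. -/
def IsqPoly (q : ℕ) {R : Type*} [Semiring R] (f : Polynomial R) : Prop :=
  ∀ n ∈ f.support, ∃ i : ℕ, n = q ^ i

/-- The set of isomorphisms from `φ` to `ψ` over `R`: `q`-polynomials that are
compositional units and intertwine `φ` and `ψ`. -/
def IsoSet (q : ℕ) {R : Type*} [CommRing R] (φ ψ : Polynomial R) : Set (Polynomial R) :=
  {u | IsqPoly q u ∧
    (∃ v : Polynomial R, IsqPoly q v ∧ u.comp v = Polynomial.X ∧ v.comp u = Polynomial.X) ∧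
    u.comp φ = ψ.comp u}


open Polynomial

lemma coeff_pow_char_pow {R : Type*} [CommRing R] (p : ℕ) [hp : Fact p.Prime] [CharP R p]
    (f : R[X]) (s d : ℕ) :
    (f ^ p ^ s).coeff d = (if p ^ s ∣ d then f.coeff (d / p ^ s) else 0) ^ p ^ s := by
  have := Polynomial.map_iterateFrobenius_expand (p := p) f s
  rw [← this, coeff_map, Polynomial.coeff_expand (pow_pos hp.out.pos s), iterateFrobenius_def]

lemma coeff_pow_qpow {R : Type*} [CommRing R] (p : ℕ) [hp : Fact p.Prime] [CharP R p]
    {e : ℕ} (he : 0 < e) {q : ℕ} (hq : q = p ^ e) (f : R[X]) (j m : ℕ) :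
    (f ^ q ^ j).coeff (q ^ m) = if j ≤ m then (f.coeff (q ^ (m - j))) ^ q ^ j else 0 := by
  subst hq
  have h1 : (p ^ e) ^ j = p ^ (e * j) := by rw [← pow_mul]
  have h2 : (p ^ e) ^ m = p ^ (e * m) := by rw [← pow_mul]
  rw [h1, h2, coeff_pow_char_pow]
  have hdvd : p ^ (e * j) ∣ p ^ (e * m) ↔ j ≤ m := by
    rw [Nat.pow_dvd_pow_iff_le_right hp.out.one_lt]
    exact ⟨fun h => le_of_mul_le_mul_left h he, fun h => Nat.mul_le_mul_left e h⟩
  by_cases hjm : j ≤ m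
  · rw [if_pos (hdvd.mpr hjm), if_pos hjm]
    congr 2
    · rw [Nat.pow_div (Nat.mul_le_mul_left e hjm) hp.out.pos, ← pow_mul]
      rw [Nat.mul_sub]
  · rw [if_neg (fun h => hjm (hdvd.mp h)), if_neg hjm, zero_pow (pow_pos hp.out.pos _).ne']

noncomputable def shapeAux {S : Type*} [CommRing S] (q r : ℕ) (a t : S) (g : ℕ → S) : Polynomial S :=
  C t * X + (∑ i ∈ Finset.Icc 1 (r - 1), C (g i) * X ^ q ^ i) + C a * X ^ q ^ r

lemma shapeAux_coeff {S : Type*} [CommRing S] {q : ℕ} (hq2 : 2 ≤ q) {r : ℕ} (hr : 2 ≤ r)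
    (a t : S) (g : ℕ → S) (k : ℕ) :
    (shapeAux q r a t g).coeff (q ^ k) =
      if k = 0 then t else if k ∈ Finset.Icc 1 (r - 1) then g k
        else if k = r then a else 0 := by
  have hinj : ∀ i j : ℕ, q ^ i = q ^ j → i = j := fun i j h => Nat.pow_right_injective hq2 h
  have T1 : (C t * X).coeff (q ^ k) = if k = 0 then t else 0 := by
    rw [coeff_C_mul, coeff_X]
    rcases Nat.eq_zero_or_pos k with rfl | hk
    · simp
    · have hgt : q ^ 1 ≤ q ^ k := Nat.pow_le_pow_right (by omega) hk
      rw [pow_one] at hgt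
      rw [if_neg (by omega : ¬ (1 : ℕ) = q ^ k), mul_zero, if_neg (by omega)]
  have T3 : (C a * X ^ q ^ r).coeff (q ^ k) = if k = r then a else 0 := by
    rw [coeff_C_mul, coeff_X_pow]
    by_cases h : k = r
    · subst h; simp
    · rw [if_neg (fun hh => h (hinj _ _ hh)), mul_zero, if_neg h]
  have T2 : (∑ i ∈ Finset.Icc 1 (r - 1), C (g i) * X ^ q ^ i).coeff (q ^ k) =
      if k ∈ Finset.Icc 1 (r - 1) then g k else 0 := by
    rw [finset_sum_coeff]
    have : ∀ i ∈ Finset.Icc 1 (r - 1),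
        (C (g i) * X ^ q ^ i).coeff (q ^ k) = if i = k then g i else 0 := by
      intro i _
      rw [coeff_C_mul, coeff_X_pow]
      by_cases h : i = k
      · subst h; simp
      · rw [if_neg (fun hh => h (hinj _ _ hh.symm)), mul_zero, if_neg h]
    rw [Finset.sum_congr rfl this, Finset.sum_ite_eq' (Finset.Icc 1 (r - 1)) k g]
  rw [shapeAux, coeff_add, coeff_add, T1, T2, T3]
  simp only [Finset.mem_Icc]
  split_ifs <;> first | omega | ring

lemma comp_right_coeff {S : Type*} [CommRing S] (p : ℕ) [hp : Fact p.Prime] [CharP S p]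
    {e : ℕ} (he : 0 < e) {q : ℕ} (hq : q = p ^ e) {r : ℕ}
    (a t : S) (g : ℕ → S) (u : Polynomial S) (m : ℕ) :
    ((shapeAux q r a t g).comp u).coeff (q ^ m) =
      t * u.coeff (q ^ m) +
      (∑ i ∈ Finset.Icc 1 (r - 1),
        g i * (if i ≤ m then (u.coeff (q ^ (m - i))) ^ q ^ i else 0)) +
      a * (if r ≤ m then (u.coeff (q ^ (m - r))) ^ q ^ r else 0) := by
  have hsum : (∑ i ∈ Finset.Icc 1 (r - 1), C (g i) * X ^ q ^ i).comp u
      = ∑ i ∈ Finset.Icc 1 (r - 1), C (g i) * u ^ q ^ i := by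
    rw [← coe_compRingHom_apply, map_sum]
    exact Finset.sum_congr rfl fun i _ => by
      rw [coe_compRingHom_apply, mul_comp, C_comp, pow_comp, X_comp]
  rw [shapeAux, add_comp, add_comp, mul_comp, C_comp, X_comp, mul_comp, C_comp, pow_comp,
    X_comp, hsum, coeff_add, coeff_add, coeff_C_mul, coeff_C_mul, finset_sum_coeff]
  congr 2
  · exact Finset.sum_congr rfl fun i _ => by
      rw [coeff_C_mul, coeff_pow_qpow p he hq]
  · rw [coeff_pow_qpow p he hq]

lemma comp_left_coeff {S : Type*} [CommRing S] (p : ℕ) [hp : Fact p.Prime] [CharP S p]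
    {e : ℕ} (he : 0 < e) {q : ℕ} (hq : q = p ^ e) (hq2 : 2 ≤ q)
    {u : Polynomial S} (hu : IsqPoly q u) (f : Polynomial S)
    (M m : ℕ) (hM : u.natDegree < q ^ M) :
    (u.comp f).coeff (q ^ m) =
      ∑ j ∈ Finset.range (M + 1),
        u.coeff (q ^ j) * (if j ≤ m then (f.coeff (q ^ (m - j))) ^ q ^ j else 0) := by
  rw [comp_eq_sum_left, sum_def, finset_sum_coeff]
  have h1 : ∀ n ∈ u.support, (C (u.coeff n) * f ^ n).coeff (q ^ m)
      = u.coeff n * (f ^ n).coeff (q ^ m) := fun n _ => coeff_C_mul _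
  rw [Finset.sum_congr rfl h1]
  have hsub : u.support ⊆ (Finset.range (M + 1)).image (q ^ ·) := by
    intro n hn
    obtain ⟨i, rfl⟩ := hu n hn
    refine Finset.mem_image.mpr ⟨i, Finset.mem_range.mpr ?_, rfl⟩
    have h2 : q ^ i ≤ u.natDegree := le_natDegree_of_ne_zero (mem_support_iff.mp hn)
    have h3 : q ^ i < q ^ M := lt_of_le_of_lt h2 hM
    have := (Nat.pow_lt_pow_iff_right (by omega : 1 < q)).mp h3
    omega
  rw [Finset.sum_subset hsub (fun x _ hx => by
    rw [mem_support_iff, not_not] at hx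
    rw [hx, zero_mul])]
  rw [Finset.sum_image (fun i _ j _ h => Nat.pow_right_injective hq2 h)]
  exact Finset.sum_congr rfl fun j _ => by rw [coeff_pow_qpow p he hq]

lemma qpoly_eq_C_mul_X {S : Type*} [CommRing S] (p : ℕ) [hp : Fact p.Prime] [CharP S p]
    {e : ℕ} (he : 0 < e) {q : ℕ} (hq : q = p ^ e) (hq2 : 2 ≤ q)
    {r : ℕ} (hr : 2 ≤ r) (t : S) (g g' : ℕ → S) {u : Polynomial S} (hu : IsqPoly q u)
    (heq : u.comp (shapeAux q r 1 t g) = (shapeAux q r 1 t g').comp u)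
    (hnil : ∀ j, 1 ≤ j → u.coeff (q ^ j) = u.coeff (q ^ j) ^ q ^ r → u.coeff (q ^ j) = 0) :
    u = C (u.coeff 1) * X := by
  have hB : u.natDegree < q ^ (u.natDegree + 1) := by
    calc u.natDegree < 2 ^ (u.natDegree + 1) := by
          have := Nat.lt_two_pow_self (n := u.natDegree)
          have h2 : (2:ℕ) ^ u.natDegree ≤ 2 ^ (u.natDegree + 1) := Nat.pow_le_pow_right (by omega) (by omega)
          omega
      _ ≤ q ^ (u.natDegree + 1) := Nat.pow_le_pow_left hq2 _
  set B := u.natDegree + 1 with hBdef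
  have key : ∀ k j, 1 ≤ j → B ≤ j + k → u.coeff (q ^ j) = 0 := by
    intro k
    induction k with
    | zero =>
      intro j hj hBj
      apply coeff_eq_zero_of_natDegree_lt
      calc u.natDegree < q ^ B := hB
        _ ≤ q ^ j := Nat.pow_le_pow_right (by omega) (by omega)
    | succ k IH =>
      intro j hj hBj
      by_cases hc : B ≤ j + k
      · exact IH j hj hc
      have hover : ∀ j', j < j' → u.coeff (q ^ j') = 0 := fun j' h =>
        IH j' (by omega) (by omega)
      have hL := comp_left_coeff p he hq hq2 hu (shapeAux q r 1 t g) (B + j + r) (j + r)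
        (lt_of_lt_of_le hB (Nat.pow_le_pow_right (by omega) (by omega)))
      have hR := comp_right_coeff p he hq (r := r) 1 t g' u (j + r)
      rw [heq, hR] at hL
      have hLsum : (∑ j' ∈ Finset.range (B + j + r + 1), u.coeff (q ^ j') *
          (if j' ≤ j + r then ((shapeAux q r 1 t g).coeff (q ^ (j + r - j'))) ^ q ^ j' else 0))
          = u.coeff (q ^ j) := by
        rw [Finset.sum_eq_single_of_mem j (Finset.mem_range.mpr (by omega))]
        · rw [if_pos (Nat.le_add_right j r), (by omega : j + r - j = r),
            shapeAux_coeff hq2 hr, if_neg (by omega),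
            if_neg (by simp only [Finset.mem_Icc]; omega), if_pos rfl, one_pow, mul_one]
        · intro b hb hbj
          rcases Nat.lt_or_ge j b with h | h
          · rw [hover b h, zero_mul]
          · have hblt : b < j := lt_of_le_of_ne h hbj
            rw [if_pos (by omega), shapeAux_coeff hq2 hr, if_neg (by omega),
              if_neg (by simp only [Finset.mem_Icc]; omega), if_neg (by omega),
              zero_pow (pow_pos (by omega : 0 < q) b).ne', mul_zero]
      have hRval : (t * u.coeff (q ^ (j + r)) +
          (∑ i ∈ Finset.Icc 1 (r - 1),
            g' i * (if i ≤ j + r then (u.coeff (q ^ (j + r - i))) ^ q ^ i else 0)) +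
          (1:S) * (if r ≤ j + r then (u.coeff (q ^ (j + r - r))) ^ q ^ r else 0))
          = u.coeff (q ^ j) ^ q ^ r := by
        have h1 : u.coeff (q ^ (j + r)) = 0 := hover (j + r) (by omega)
        have hsum0 : (∑ i ∈ Finset.Icc 1 (r - 1),
            g' i * (if i ≤ j + r then (u.coeff (q ^ (j + r - i))) ^ q ^ i else 0)) = 0 := by
          refine Finset.sum_eq_zero fun i hi => ?_
          rw [Finset.mem_Icc] at hi
          rw [if_pos (by omega), hover (j + r - i) (by omega),
            zero_pow (pow_pos (by omega : 0 < q) i).ne', mul_zero]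
        rw [h1, mul_zero, hsum0, add_zero, zero_add, if_pos (Nat.le_add_left r j),
          (by omega : j + r - r = j), one_mul]
      rw [hLsum, hRval] at hL
      exact hnil j hj hL.symm
  have hzero : ∀ j, 1 ≤ j → u.coeff (q ^ j) = 0 := fun j hj => key B j hj (by omega)
  ext n
  rw [coeff_C_mul, coeff_X]
  by_cases hn : n = 1
  · subst hn; rw [if_pos rfl, mul_one]
  · rw [if_neg (fun h => hn h.symm), mul_zero]
    by_cases hmem : n ∈ u.support
    · obtain ⟨i, rfl⟩ := hu n hmem
      rcases Nat.eq_zero_or_pos i with rfl | hi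
      · simp at hn
      · exact hzero i hi
    · exact notMem_support_iff.mp hmem

lemma relations_of_comm {S : Type*} [CommRing S] (p : ℕ) [hp : Fact p.Prime] [CharP S p]
    {e : ℕ} (he : 0 < e) {q : ℕ} (hq : q = p ^ e) (hq2 : 2 ≤ q)
    {r : ℕ} (hr : 2 ≤ r) (t : S) (g g' : ℕ → S) (c : S)
    (heq : (C c * X).comp (shapeAux q r 1 t g) = (shapeAux q r 1 t g').comp (C c * X)) :
    (∀ i ∈ Finset.Icc 1 (r - 1), c * g i = g' i * c ^ q ^ i) ∧ c = c ^ q ^ r := by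
  have hcoef : ∀ k : ℕ, (C c * X).coeff (q ^ k) = if k = 0 then c else 0 := by
    intro k
    rw [coeff_C_mul, coeff_X]
    rcases Nat.eq_zero_or_pos k with rfl | hk
    · simp
    · have hgt : q ^ 1 ≤ q ^ k := Nat.pow_le_pow_right (by omega) hk
      rw [pow_one] at hgt
      rw [if_neg (by omega : ¬ (1:ℕ) = q ^ k), mul_zero, if_neg (by omega)]
  have hLc : ∀ k : ℕ, ((C c * X).comp (shapeAux q r 1 t g)).coeff (q ^ k)
      = c * (shapeAux q r 1 t g).coeff (q ^ k) := by
    intro k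
    rw [mul_comp, C_comp, X_comp, coeff_C_mul]
  have key : ∀ m : ℕ, c * (shapeAux q r 1 t g).coeff (q ^ m) =
      t * (if m = 0 then c else 0) +
      (∑ i ∈ Finset.Icc 1 (r - 1),
        g' i * (if i ≤ m then (if m - i = 0 then c else 0) ^ q ^ i else 0)) +
      (1:S) * (if r ≤ m then (if m - r = 0 then c else 0) ^ q ^ r else 0) := by
    intro m
    have := comp_right_coeff p he hq (r := r) 1 t g' (C c * X) m
    rw [← hLc m, heq, this, hcoef]
    congr 2
    · exact Finset.sum_congr rfl fun i _ => by rw [hcoef]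
    · rw [hcoef]
  constructor
  · intro i0 hi0
    rw [Finset.mem_Icc] at hi0
    have h := key i0
    rw [shapeAux_coeff hq2 hr, if_neg (by omega), if_pos (Finset.mem_Icc.mpr hi0),
      if_neg (by omega), mul_zero, zero_add, if_neg (by omega), mul_zero, add_zero] at h
    rw [h, Finset.sum_eq_single_of_mem i0 (Finset.mem_Icc.mpr hi0)]
    · rw [if_pos le_rfl, if_pos (by omega)]
    · intro b hb hbne
      rw [Finset.mem_Icc] at hb
      rcases Nat.lt_or_ge i0 b with hlt | hge
      · rw [if_neg (by omega), mul_zero]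
      · rw [if_pos (by omega), if_neg (by omega),
          zero_pow (pow_pos (by omega : 0 < q) b).ne', mul_zero]
  · have h := key r
    rw [shapeAux_coeff hq2 hr, if_neg (by omega),
      if_neg (by simp only [Finset.mem_Icc]; omega), if_pos rfl, mul_one,
      if_neg (by omega), mul_zero, zero_add] at h
    have hsum0 : (∑ i ∈ Finset.Icc 1 (r - 1),
        g' i * (if i ≤ r then (if r - i = 0 then c else 0) ^ q ^ i else 0)) = 0 := by
      refine Finset.sum_eq_zero fun i hi => ?_
      rw [Finset.mem_Icc] at hi
      rw [if_pos (by omega), if_neg (by omega),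
        zero_pow (pow_pos (by omega : 0 < q) i).ne', mul_zero]
    rw [hsum0, zero_add, if_pos le_rfl, if_pos (by omega), one_mul] at h
    exact h

section Quot

variable {W : Type*} [CommRing W] [IsDomain W] [IsDiscreteValuationRing W]

lemma span_pow_le_max (μ : W) (hμ : Irreducible μ) {n : ℕ} (hn : 1 ≤ n) :
    Ideal.span {μ ^ n} ≤ IsLocalRing.maximalIdeal W := by
  rw [Ideal.span_le, Set.singleton_subset_iff]
  exact Ideal.pow_mem_of_mem _ (by
    rw [IsLocalRing.mem_maximalIdeal]
    exact hμ.not_isUnit) n hn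

noncomputable def rho (μ : W) (hμ : Irreducible μ) {n : ℕ} (hn : 1 ≤ n) :
    (W ⧸ Ideal.span {μ ^ n}) →+* IsLocalRing.ResidueField W :=
  Ideal.Quotient.lift _ (IsLocalRing.residue W) (fun a ha => by
    rw [IsLocalRing.residue_eq_zero_iff]
    exact span_pow_le_max μ hμ hn ha)

lemma rho_mk (μ : W) (hμ : Irreducible μ) {n : ℕ} (hn : 1 ≤ n) (w : W) :
    rho μ hμ hn (Ideal.Quotient.mk _ w) = IsLocalRing.residue W w := rfl

lemma pow_eq_zero_of_rho_eq_zero (μ : W) (hμ : Irreducible μ) {n : ℕ} (hn : 1 ≤ n)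
    {x : W ⧸ Ideal.span {μ ^ n}} (hx : rho μ hμ hn x = 0) : x ^ n = 0 := by
  obtain ⟨w, rfl⟩ := Ideal.Quotient.mk_surjective x
  rw [rho_mk, IsLocalRing.residue_eq_zero_iff, hμ.maximalIdeal_eq,
    Ideal.mem_span_singleton] at hx
  obtain ⟨y, rfl⟩ := hx
  rw [← map_pow, Ideal.Quotient.eq_zero_iff_mem, mul_pow, Ideal.mem_span_singleton]
  exact Dvd.dvd.mul_right dvd_rfl _

lemma isUnit_of_rho_ne_zero (μ : W) (hμ : Irreducible μ) {n : ℕ} (hn : 1 ≤ n)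
    {x : W ⧸ Ideal.span {μ ^ n}} (hx : rho μ hμ hn x ≠ 0) : IsUnit x := by
  obtain ⟨w, rfl⟩ := Ideal.Quotient.mk_surjective x
  by_contra hW
  apply hx
  have hwnu : ¬ IsUnit w := fun h => hW (h.map _)
  rw [rho_mk, IsLocalRing.residue_eq_zero_iff]
  exact IsLocalRing.mem_maximalIdeal w |>.mpr hwnu

lemma eq_zero_of_fixpoint (μ : W) (hμ : Irreducible μ) {n : ℕ} (hn : 1 ≤ n)
    {x : W ⧸ Ideal.span {μ ^ n}} (hx : rho μ hμ hn x = 0) {s : ℕ} (hs : 2 ≤ s)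
    (hfix : x = x ^ s) : x = 0 := by
  have hnil : IsNilpotent x := ⟨n, pow_eq_zero_of_rho_eq_zero μ hμ hn hx⟩
  have h1 : x * (1 - x ^ (s - 1)) = 0 := by
    rw [mul_sub, mul_one, ← pow_succ']
    rw [(by omega : s - 1 + 1 = s), ← hfix, sub_self]
  have hu : IsUnit (1 - x ^ (s - 1)) := ((IsNilpotent.pow_of_pos hnil (by omega : s - 1 ≠ 0))).isUnit_one_sub
  exact (hu.mul_left_eq_zero).mp h1

lemma root_unique (μ : W) (hμ : Irreducible μ) {n : ℕ} (hn : 1 ≤ n) {m0 : ℕ}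
    (hm0 : ((m0 : ℕ) : IsLocalRing.ResidueField W) ≠ 0)
    {c c' : W ⧸ Ideal.span {μ ^ n}} (hc : IsUnit c)
    (hcm : c ^ m0 = 1) (hc'm : c' ^ m0 = 1)
    (hres : rho μ hμ hn c = rho μ hμ hn c') : c = c' := by
  have h0 : (∑ i ∈ Finset.range m0, c ^ i * c' ^ (m0 - 1 - i)) * (c - c') = 0 := by
    rw [geom_sum₂_mul, hcm, hc'm, sub_self]
  have hρc : rho μ hμ hn c ≠ 0 := by
    have := hc.map (rho μ hμ hn)
    exact this.ne_zero
  have hρS : rho μ hμ hn (∑ i ∈ Finset.range m0, c ^ i * c' ^ (m0 - 1 - i))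
      = (m0 : IsLocalRing.ResidueField W) * (rho μ hμ hn c) ^ (m0 - 1) := by
    rw [map_sum]
    have : ∀ i ∈ Finset.range m0, rho μ hμ hn (c ^ i * c' ^ (m0 - 1 - i))
        = (rho μ hμ hn c) ^ (m0 - 1) := by
      intro i hi
      rw [Finset.mem_range] at hi
      rw [map_mul, map_pow, map_pow, ← hres, ← pow_add]
      congr 1
      omega
    rw [Finset.sum_congr rfl this, Finset.sum_const, Finset.card_range, nsmul_eq_mul]
  have hSu : IsUnit (∑ i ∈ Finset.range m0, c ^ i * c' ^ (m0 - 1 - i)) := by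
    apply isUnit_of_rho_ne_zero μ hμ hn
    rw [hρS]
    exact mul_ne_zero hm0 (pow_ne_zero _ hρc)
  have := (hSu.mul_right_eq_zero ).mp h0
  · exact sub_eq_zero.mp this

end Quot

lemma map_shapeAux {S T : Type*} [CommRing S] [CommRing T] (f : S →+* T)
    (q r : ℕ) (a t : S) (g : ℕ → S) :
    (shapeAux q r a t g).map f = shapeAux q r (f a) (f t) (fun i => f (g i)) := by
  simp only [shapeAux, Polynomial.map_add, Polynomial.map_mul, Polynomial.map_pow,
    Polynomial.map_C, Polynomial.map_X, Polynomial.map_sum]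

lemma keyLemma {W : Type*} [CommRing W] [IsDomain W] [IsDiscreteValuationRing W]
    (p : ℕ) [hpf : Fact p.Prime] [CharP W p]
    {e : ℕ} (he : 0 < e) {q : ℕ} (hq : q = p ^ e) (hq2 : 2 ≤ q)
    {r : ℕ} (hr : 2 ≤ r) (t : W) (g g' : ℕ → W)
    {μ : W} (hμ : Irreducible μ) {n : ℕ} (hn : 1 ≤ n)
    {u : Polynomial (W ⧸ Ideal.span {μ ^ n})}
    (hu : u ∈ IsoSet q ((shapeAux q r 1 t g).map (Ideal.Quotient.mk (Ideal.span {μ ^ n})))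
      ((shapeAux q r 1 t g').map (Ideal.Quotient.mk (Ideal.span {μ ^ n})))) :
    ∃ c : W ⧸ Ideal.span {μ ^ n}, u = Polynomial.C c * Polynomial.X ∧ IsUnit c ∧
      rho μ hμ hn c = rho μ hμ hn (u.coeff 1) ∧
      c ^ (q ^ r - 1) = 1 ∧
      ∀ i ∈ Finset.Icc 1 (r - 1),
        Ideal.Quotient.mk (Ideal.span {μ ^ n}) (g i)
          = Ideal.Quotient.mk (Ideal.span {μ ^ n}) (g' i) * c ^ (q ^ i - 1) := by
  obtain ⟨hqp, ⟨v, hvq, huv, hvu⟩, hcomm⟩ := hu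
  set R := W ⧸ Ideal.span {μ ^ n} with hR
  set mk := Ideal.Quotient.mk (Ideal.span {μ ^ n}) with hmk
  haveI : Nontrivial R := Ideal.Quotient.nontrivial_iff.mpr (by
    rw [Ne, Ideal.span_singleton_eq_top]
    exact fun h => hμ.not_isUnit ((isUnit_pow_iff (by omega : n ≠ 0)).mp h))
  haveI : CharP R p := (CharP.charP_iff_prime_eq_zero hpf.out).mpr (by
    rw [← map_natCast mk, CharP.cast_eq_zero, map_zero])
  have hq2r : 2 ≤ q ^ r := le_trans hq2 (Nat.le_self_pow (by omega) q)
  rw [map_shapeAux, map_shapeAux, map_one] at hcomm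
  set ρ := rho μ hμ hn with hρdef
  have hmapcomp : ((v.map ρ).comp (u.map ρ)) = X := by
    have h := congrArg (Polynomial.map ρ) hvu
    rwa [Polynomial.map_comp, Polynomial.map_X] at h
  have hdeg : (u.map ρ).natDegree = 1 := by
    have h1 : (v.map ρ).natDegree * (u.map ρ).natDegree = 1 := by
      rw [← natDegree_comp, hmapcomp, natDegree_X]
    exact Nat.eq_one_of_mul_eq_one_left h1
  have humap_ne : u.map ρ ≠ 0 := fun h => by simp [h] at hdeg
  have hρ1 : ρ (u.coeff 1) ≠ 0 := by
    rw [← coeff_map]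
    have h2 : (u.map ρ).coeff 1 = (u.map ρ).leadingCoeff := by rw [leadingCoeff, hdeg]
    rw [h2]
    exact leadingCoeff_ne_zero.mpr humap_ne
  have hρj : ∀ j, 1 ≤ j → ρ (u.coeff (q ^ j)) = 0 := by
    intro j hj
    rw [← coeff_map]
    apply coeff_eq_zero_of_natDegree_lt
    rw [hdeg]
    calc 1 < q := by omega
      _ ≤ q ^ j := Nat.le_self_pow (by omega) q
  have hnil : ∀ j, 1 ≤ j → u.coeff (q ^ j) = u.coeff (q ^ j) ^ q ^ r
      → u.coeff (q ^ j) = 0 := fun j hj hfix =>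
    eq_zero_of_fixpoint μ hμ hn (hρj j hj) hq2r hfix
  have hux : u = C (u.coeff 1) * X :=
    qpoly_eq_C_mul_X p he hq hq2 hr (mk t) (fun i => mk (g i)) (fun i => mk (g' i))
      hqp hcomm hnil
  set c := u.coeff 1 with hcdef
  obtain ⟨hreli, hfixc⟩ := relations_of_comm p he hq hq2 hr (mk t)
    (fun i => mk (g i)) (fun i => mk (g' i)) c (by rw [← hux]; exact hcomm)
  have hcu : IsUnit c := isUnit_of_rho_ne_zero μ hμ hn hρ1
  have hm1 : c ^ (q ^ r - 1) = 1 := by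
    have h2 : c ^ (q ^ r - 1) * c = 1 * c := by
      rw [← pow_succ, (by omega : q ^ r - 1 + 1 = q ^ r), ← hfixc, one_mul]
    exact hcu.mul_right_cancel h2
  refine ⟨c, hux, hcu, rfl, hm1, ?_⟩
  intro i hi
  have hqi : 1 ≤ q ^ i := Nat.one_le_pow _ _ (by omega)
  have h3 := hreli i hi
  have h4 : c ^ q ^ i = c ^ (q ^ i - 1) * c := by
    rw [← pow_succ, (by omega : q ^ i - 1 + 1 = q ^ i)]
  rw [h4, ← mul_assoc, mul_comm c (mk (g i))] at h3
  exact hcu.mul_right_cancel h3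

lemma count_le {W : Type*} [CommRing W] [IsDomain W] [IsDiscreteValuationRing W]
    (p : ℕ) [hpf : Fact p.Prime] [CharP W p]
    {e : ℕ} (he : 0 < e) {q : ℕ} (hq : q = p ^ e) (hq2 : 2 ≤ q)
    {r : ℕ} (hr : 2 ≤ r) (t : W) (g g' : ℕ → W)
    {μ : W} (hμ : Irreducible μ) {n : ℕ} (hn : 1 ≤ n)
    (hm0 : (((q ^ r - 1 : ℕ)) : IsLocalRing.ResidueField W) ≠ 0) :
    (IsoSet q ((shapeAux q r 1 t g).map (Ideal.Quotient.mk (Ideal.span {μ ^ n})))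
      ((shapeAux q r 1 t g').map (Ideal.Quotient.mk (Ideal.span {μ ^ n})))).encard
      ≤ ((q ^ r - 1 : ℕ) : ℕ∞) := by
  classical
  have hq2r : 2 ≤ q ^ r := le_trans hq2 (Nat.le_self_pow (by omega) q)
  set S := IsoSet q ((shapeAux q r 1 t g).map (Ideal.Quotient.mk (Ideal.span {μ ^ n})))
      ((shapeAux q r 1 t g').map (Ideal.Quotient.mk (Ideal.span {μ ^ n}))) with hS
  set f : Polynomial (W ⧸ Ideal.span {μ ^ n}) → IsLocalRing.ResidueField W :=
    fun u => rho μ hμ hn (u.coeff 1) with hf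
  have hinj : Set.InjOn f S := by
    intro u hu u' hu' hmatch
    obtain ⟨c, hux, hcu, hcr, hm1, _⟩ := keyLemma p he hq hq2 hr t g g' hμ hn hu
    obtain ⟨c', hux', hcu', hcr', hm1', _⟩ := keyLemma p he hq hq2 hr t g g' hμ hn hu'
    have hcc' : c = c' := root_unique μ hμ hn hm0 hcu hm1 hm1'
      (by rw [hcr, hcr']; exact hmatch)
    rw [hux, hux', hcc']
  have himg : f '' S ⊆ ((Polynomial.nthRoots (q ^ r - 1)
      (1 : IsLocalRing.ResidueField W)).toFinset : Set (IsLocalRing.ResidueField W)) := by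
    rintro z ⟨u, hu, rfl⟩
    obtain ⟨c, hux, hcu, hcr, hm1, _⟩ := keyLemma p he hq hq2 hr t g g' hμ hn hu
    simp only [Finset.mem_coe, Multiset.mem_toFinset]
    rw [mem_nthRoots (by omega : 0 < q ^ r - 1)]
    show rho μ hμ hn (u.coeff 1) ^ (q ^ r - 1) = 1
    rw [← hcr, ← map_pow, hm1, map_one]
  calc S.encard = (f '' S).encard := (hinj.encard_image).symm
    _ ≤ _ := Set.encard_le_encard himg
    _ ≤ ((q ^ r - 1 : ℕ) : ℕ∞) := by
        rw [Set.encard_coe_eq_coe_finsetCard]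
        exact Nat.cast_le.mpr (le_trans (Multiset.toFinset_card_le _)
          (Polynomial.card_nthRoots _ _))

lemma congr_of_nonempty {W : Type*} [CommRing W] [IsDomain W] [IsDiscreteValuationRing W]
    (p : ℕ) [hpf : Fact p.Prime] [CharP W p]
    {e : ℕ} (he : 0 < e) {q : ℕ} (hq : q = p ^ e) (hq2 : 2 ≤ q)
    {r : ℕ} (hr : 2 ≤ r) (t : W) (g g' : ℕ → W)
    {μ : W} (hμ : Irreducible μ) {n : ℕ} (hn : 1 ≤ n)
    (δ : ℕ → ℕ) (δr : ℕ)
    (hδ : (∑ i ∈ Finset.Icc 1 (r - 1), δ i * (q ^ i - 1)) = δr * (q ^ r - 1))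
    (hne : (IsoSet q ((shapeAux q r 1 t g).map (Ideal.Quotient.mk (Ideal.span {μ ^ n})))
      ((shapeAux q r 1 t g').map (Ideal.Quotient.mk (Ideal.span {μ ^ n})))).Nonempty) :
    (∏ i ∈ Finset.Icc 1 (r - 1), g i ^ δ i) - (∏ i ∈ Finset.Icc 1 (r - 1), g' i ^ δ i)
      ∈ Ideal.span {μ ^ n} := by
  obtain ⟨u, hu⟩ := hne
  obtain ⟨c, hux, hcu, hcr, hm1, hgrel⟩ := keyLemma p he hq hq2 hr t g g' hμ hn hu
  set mk := Ideal.Quotient.mk (Ideal.span {μ ^ n}) with hmk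
  have hprod : mk (∏ i ∈ Finset.Icc 1 (r - 1), g i ^ δ i)
      = mk (∏ i ∈ Finset.Icc 1 (r - 1), g' i ^ δ i) := by
    rw [map_prod, map_prod]
    simp_rw [map_pow]
    calc (∏ i ∈ Finset.Icc 1 (r - 1), mk (g i) ^ δ i)
        = ∏ i ∈ Finset.Icc 1 (r - 1), (mk (g' i) ^ δ i * c ^ (δ i * (q ^ i - 1))) := by
          refine Finset.prod_congr rfl fun i hi => ?_
          rw [hgrel i hi, mul_pow, ← pow_mul, mul_comm (q ^ i - 1) (δ i)]
      _ = (∏ i ∈ Finset.Icc 1 (r - 1), mk (g' i) ^ δ i)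
            * c ^ (∑ i ∈ Finset.Icc 1 (r - 1), δ i * (q ^ i - 1)) := by
          rw [Finset.prod_mul_distrib, Finset.prod_pow_eq_pow_sum]
      _ = ∏ i ∈ Finset.Icc 1 (r - 1), mk (g' i) ^ δ i := by
          rw [hδ, mul_comm δr (q ^ r - 1), pow_mul, hm1, one_pow, mul_one]
  have h2 : mk ((∏ i ∈ Finset.Icc 1 (r - 1), g i ^ δ i)
      - (∏ i ∈ Finset.Icc 1 (r - 1), g' i ^ δ i)) = 0 := by
    rw [map_sub, hprod, sub_self]
  exact (Ideal.Quotient.eq_zero_iff_mem).mp h2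

open Polynomial in
/-- Proposition 3.9 of the paper, in normalized form: the valuation of the difference of
basic `J`-invariants of `φ` and `φ'` is bounded below in terms of the number of
isomorphisms `φ ≅ φ'` modulo `μ^n`. -/
theorem stmt6 (p : ℕ) (hp : p.Prime) (e : ℕ) (he : 0 < e) (q : ℕ) (hq : q = p ^ e)
    (W : Type*) [CommRing W] [IsDomain W] [IsDiscreteValuationRing W] [CharP W p]
    [IsAdicComplete (IsLocalRing.maximalIdeal W) W]
    [IsAlgClosed (IsLocalRing.ResidueField W)]
    (μ : W) (hμ : Irreducible μ)
    (ν : W → ℕ∞) (hν0 : ν 0 = ⊤)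
    (hν : ∀ (m : ℕ) (w : W), IsUnit w → ν (μ ^ m * w) = m)
    (r : ℕ) (hr : 2 ≤ r) (t : W) (g g' : ℕ → W)
    (φ φ' : Polynomial W)
    (hφ : φ = C t * X + (∑ i ∈ Finset.Icc 1 (r - 1), C (g i) * X ^ q ^ i) + X ^ q ^ r)
    (hφ' : φ' = C t * X + (∑ i ∈ Finset.Icc 1 (r - 1), C (g' i) * X ^ q ^ i) + X ^ q ^ r)
    (δ : ℕ → ℕ) (δr : ℕ) (hδr : 0 < δr)
    (hδ : (∑ i ∈ Finset.Icc 1 (r - 1), δ i * (q ^ i - 1)) = δr * (q ^ r - 1)) :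
    ((q ^ r - 1 : ℕ) : ℕ∞) *
        ν ((∏ i ∈ Finset.Icc 1 (r - 1), g i ^ δ i)
            - ∏ i ∈ Finset.Icc 1 (r - 1), g' i ^ δ i) ≥
      ⨆ N : ℕ, ∑ n ∈ Finset.Icc 1 N,
        (IsoSet q (φ.map (Ideal.Quotient.mk (Ideal.span {μ ^ n})))
          (φ'.map (Ideal.Quotient.mk (Ideal.span {μ ^ n})))).encard := by
  classical
  haveI : Fact p.Prime := ⟨hp⟩
  have hq2 : 2 ≤ q := by
    rw [hq]
    calc 2 ≤ p := hp.two_le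
      _ ≤ p ^ e := Nat.le_self_pow he.ne' p
  have hq2r : 2 ≤ q ^ r := le_trans hq2 (Nat.le_self_pow (by omega) q)
  have hφs : φ = shapeAux q r 1 t g := by rw [hφ, shapeAux, C_1, one_mul]
  have hφ's : φ' = shapeAux q r 1 t g' := by rw [hφ', shapeAux, C_1, one_mul]
  -- residue field facts
  have hpk : ((p : ℕ) : IsLocalRing.ResidueField W) = 0 := by
    rw [← map_natCast (IsLocalRing.residue W), CharP.cast_eq_zero, map_zero]
  have hqrk : ((q ^ r : ℕ) : IsLocalRing.ResidueField W) = 0 := by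
    rw [hq, ← pow_mul, Nat.cast_pow, hpk, zero_pow (by positivity)]
  have hm0k : (((q ^ r - 1 : ℕ)) : IsLocalRing.ResidueField W) ≠ 0 := by
    rw [Nat.cast_sub (by omega : 1 ≤ q ^ r), hqrk, Nat.cast_one, zero_sub]
    exact neg_ne_zero.mpr one_ne_zero
  set J := ∏ i ∈ Finset.Icc 1 (r - 1), g i ^ δ i with hJ
  set J' := ∏ i ∈ Finset.Icc 1 (r - 1), g' i ^ δ i with hJ'
  by_cases hD : J - J' = 0
  · rw [ge_iff_le, hD, hν0, ENat.mul_top (Nat.cast_ne_zero.mpr (by omega : q ^ r - 1 ≠ 0))]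
    exact le_top
  · obtain ⟨M, w, hDw⟩ := IsDiscreteValuationRing.eq_unit_mul_pow_irreducible hD hμ
    have hνD : ν (J - J') = M := by rw [hDw, mul_comm]; exact hν M w w.isUnit
    rw [ge_iff_le, hνD]
    refine iSup_le fun N => ?_
    have hterm : ∀ n ∈ Finset.Icc 1 N,
        (IsoSet q (φ.map (Ideal.Quotient.mk (Ideal.span {μ ^ n})))
          (φ'.map (Ideal.Quotient.mk (Ideal.span {μ ^ n})))).encard
          ≤ if n ≤ M then ((q ^ r - 1 : ℕ) : ℕ∞) else 0 := by
      intro n hnmem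
      rw [Finset.mem_Icc] at hnmem
      have hn1 : 1 ≤ n := hnmem.1
      by_cases hne : (IsoSet q (φ.map (Ideal.Quotient.mk (Ideal.span {μ ^ n})))
          (φ'.map (Ideal.Quotient.mk (Ideal.span {μ ^ n})))).Nonempty
      · have hmem : J - J' ∈ Ideal.span {μ ^ n} := by
          apply congr_of_nonempty p he hq hq2 hr t g g' hμ hn1 δ δr hδ
          rwa [hφs, hφ's] at hne
        have hdvd : μ ^ n ∣ J - J' := Ideal.mem_span_singleton.mp hmem
        have hnM : n ≤ M := by
          by_contra hcon
          push_neg at hcon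
          have h1 : μ ^ M * μ ∣ μ ^ M * w := by
            rw [← pow_succ]
            calc μ ^ (M + 1) ∣ μ ^ n := pow_dvd_pow μ (by omega)
              _ ∣ J - J' := hdvd
              _ = μ ^ M * w := by rw [hDw, mul_comm]
          have h2 : μ ∣ (w : W) :=
            (mul_dvd_mul_iff_left (pow_ne_zero M hμ.ne_zero)).mp h1
          exact hμ.not_isUnit (isUnit_of_dvd_unit h2 w.isUnit)
        rw [if_pos hnM, hφs, hφ's]
        exact count_le p he hq hq2 hr t g g' hμ hn1 hm0k
      · rw [Set.not_nonempty_iff_eq_empty.mp hne, Set.encard_empty]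
        exact zero_le
    calc (∑ n ∈ Finset.Icc 1 N,
          (IsoSet q (φ.map (Ideal.Quotient.mk (Ideal.span {μ ^ n})))
            (φ'.map (Ideal.Quotient.mk (Ideal.span {μ ^ n})))).encard)
        ≤ ∑ n ∈ Finset.Icc 1 N, (if n ≤ M then ((q ^ r - 1 : ℕ) : ℕ∞) else 0) :=
          Finset.sum_le_sum hterm
      _ = ∑ n ∈ (Finset.Icc 1 N).filter (· ≤ M), ((q ^ r - 1 : ℕ) : ℕ∞) :=
          (Finset.sum_filter _ _).symm
      _ = (((Finset.Icc 1 N).filter (· ≤ M)).card : ℕ∞) * ((q ^ r - 1 : ℕ) : ℕ∞) := by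
          rw [Finset.sum_const, nsmul_eq_mul]
      _ ≤ (M : ℕ∞) * ((q ^ r - 1 : ℕ) : ℕ∞) := by
          apply mul_le_mul_left
          apply Nat.cast_le.mpr
          calc ((Finset.Icc 1 N).filter (· ≤ M)).card
              ≤ (Finset.Icc 1 M).card := Finset.card_le_card (by
                intro x hx
                simp only [Finset.mem_filter, Finset.mem_Icc] at hx ⊢
                omega)
            _ = M := by rw [Nat.card_Icc]; omega
      _ = ((q ^ r - 1 : ℕ) : ℕ∞) * (M : ℕ∞) := mul_comm _ _
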